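/- Let g ≥ 1 and D ≥ 2 be integers, 0 < x_0 < 1, 0 < δ < 1 with x_0 < 1 - δ, 0 < R, and let P(x) = Σ_{i=2}^{D} p_i x^i with p_i ≥ 0 and Σ_{i=2}^{D} p_i = 1. Let r_0 ≥ 0 be the unique real with Γ_g(r_0) = (g-1)!·(1 - x_0), and define f(x) = 1 - Γ_g(r_0 + g(1-R)·P'(x))/(g-1)!. Assume R < 1 and that x < f(x) for all x ∈ (x_0, 1-δ). Then the iterates u_0 = x_0, u_{k+1} = f(u_k) form a monotone nondecreasing sequence in [x_0, 1) that converges to a limit L with L ≥ 1 - δ. -/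

import Mathlib

/-- `Gam g x = (g-1)! · e^{-x} · Σ_{i=0}^{g} x^i/i!`. -/
noncomputable def Gam (α : ℕ) (x : ℝ) : ℝ :=
  (Nat.factorial (α - 1) : ℝ) * Real.exp (-x) *
    ∑ i ∈ Finset.range (α + 1), x ^ i / (Nat.factorial i : ℝ)

lemma gam_hasDerivAt (g : ℕ) (x : ℝ) :
    HasDerivAt (Gam g)
      (-((Nat.factorial (g - 1) : ℝ) * Real.exp (-x) * x ^ g / (Nat.factorial g : ℝ))) x := by
  have hS : HasDerivAt (fun y : ℝ => ∑ i ∈ Finset.range (g + 1), y ^ i / (Nat.factorial i : ℝ))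
      (∑ i ∈ Finset.range g, x ^ i / (Nat.factorial i : ℝ)) x := by
    have h1 : HasDerivAt (fun y : ℝ => ∑ i ∈ Finset.range (g + 1), y ^ i / (Nat.factorial i : ℝ))
        (∑ i ∈ Finset.range (g + 1), ((i : ℝ) * x ^ (i - 1)) / (Nat.factorial i : ℝ)) x :=
      HasDerivAt.fun_sum fun i _ => (hasDerivAt_pow i x).div_const _
    convert h1 using 1
    rw [Finset.sum_range_succ']
    simp only [Nat.cast_zero, zero_mul, zero_div, add_zero]
    refine (Finset.sum_congr rfl fun i _ => ?_).symm
    rw [Nat.factorial_succ]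
    have h : ((i : ℝ) + 1) ≠ 0 := by positivity
    have h2 : (Nat.factorial i : ℝ) ≠ 0 := by positivity
    push_cast
    field_simp
  have hexp : HasDerivAt (fun y : ℝ => Real.exp (-y)) (Real.exp (-x) * (-1)) x :=
    ((hasDerivAt_id x).neg).exp
  have hprod := (hexp.mul hS).const_mul ((Nat.factorial (g - 1) : ℝ))
  have heq : Gam g = fun y : ℝ => (Nat.factorial (g - 1) : ℝ) *
      (Real.exp (-y) * ∑ i ∈ Finset.range (g + 1), y ^ i / (Nat.factorial i : ℝ)) := by
    funext y; unfold Gam; ring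
  rw [heq]
  refine hprod.congr_deriv ?_
  rw [Finset.sum_range_succ]
  field_simp
  ring

lemma gam_continuous (g : ℕ) : Continuous (Gam g) :=
  continuous_iff_continuousAt.mpr fun x => (gam_hasDerivAt g x).continuousAt

lemma gam_strictAntiOn (g : ℕ) : StrictAntiOn (Gam g) (Set.Ici 0) := by
  apply strictAntiOn_of_deriv_neg (convex_Ici 0) (gam_continuous g).continuousOn
  intro x hx
  rw [interior_Ici] at hx
  rw [(gam_hasDerivAt g x).deriv]
  have hx0 : (0 : ℝ) < x := hx
  have h1 : (0 : ℝ) < (Nat.factorial (g - 1) : ℝ) := by positivity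
  have h2 : (0 : ℝ) < (Nat.factorial g : ℝ) := by positivity
  have := Real.exp_pos (-x)
  rw [neg_lt_zero]
  positivity

lemma gam_pos (g : ℕ) (x : ℝ) (hx : 0 ≤ x) : 0 < Gam g x := by
  unfold Gam
  have hsum : 0 < ∑ i ∈ Finset.range (g + 1), x ^ i / (Nat.factorial i : ℝ) :=
    Finset.sum_pos' (fun i _ => by positivity)
      ⟨0, Finset.mem_range.mpr (Nat.succ_pos g), by simp⟩
  have h1 : (0 : ℝ) < (Nat.factorial (g - 1) : ℝ) := by positivity
  have := Real.exp_pos (-x)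
  positivity

/-- Density-evolution content of Theorem 1: with `Γ_g(r_0) = (g-1)!(1-x_0)`,
`f(x) = 1 - Γ_g(r_0 + g(1-R)P'(x))/(g-1)!`, `R < 1`, and `x < f(x)` on `(x_0, 1-δ)`, the
iterates `u_0 = x_0`, `u_{k+1} = f(u_k)` form a monotone nondecreasing sequence in
`[x_0, 1)` converging to a limit `L ≥ 1 - δ`. -/
theorem stmt_10 (g : ℕ) (hg : 1 ≤ g) (D : ℕ) (hD : 2 ≤ D)
    (x0 δ R : ℝ) (hx00 : 0 < x0) (hx01 : x0 < 1) (hδ0 : 0 < δ) (hδ1 : δ < 1)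
    (hx0δ : x0 < 1 - δ) (hR0 : 0 < R) (hR1 : R < 1)
    (p : ℕ → ℝ) (hp : ∀ i, 0 ≤ p i) (hsum : ∑ i ∈ Finset.Icc 2 D, p i = 1)
    (P' : ℝ → ℝ) (hP' : ∀ x : ℝ, P' x = ∑ i ∈ Finset.Icc 2 D, (i : ℝ) * p i * x ^ (i - 1))
    (r0 : ℝ) (hr0 : 0 ≤ r0)
    (hr0eq : Gam g r0 = (Nat.factorial (g - 1) : ℝ) * (1 - x0))
    (f : ℝ → ℝ)
    (hf : ∀ x : ℝ,
      f x = 1 - Gam g (r0 + (g : ℝ) * (1 - R) * P' x) / (Nat.factorial (g - 1) : ℝ))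
    (hlt : ∀ x ∈ Set.Ioo x0 (1 - δ), x < f x)
    (u : ℕ → ℝ) (hu0 : u 0 = x0) (hu : ∀ k, u (k + 1) = f (u k)) :
    Monotone u ∧ (∀ k, u k ∈ Set.Ico x0 1) ∧
    ∃ L : ℝ, Filter.Tendsto u Filter.atTop (nhds L) ∧ 1 - δ ≤ L := by
  have hC : (0 : ℝ) < (Nat.factorial (g - 1) : ℝ) := by positivity
  have hc : (0 : ℝ) < (g : ℝ) * (1 - R) := by
    have : (0 : ℝ) < (g : ℝ) := by exact_mod_cast hg
    nlinarith
  -- P' facts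
  have hP'nonneg : ∀ x : ℝ, 0 ≤ x → 0 ≤ P' x := by
    intro x hx
    rw [hP' x]
    exact Finset.sum_nonneg fun i _ =>
      mul_nonneg (mul_nonneg (Nat.cast_nonneg i) (hp i)) (pow_nonneg hx _)
  have hP'mono : ∀ x y : ℝ, 0 ≤ x → x ≤ y → P' x ≤ P' y := by
    intro x y hx hxy
    rw [hP' x, hP' y]
    exact Finset.sum_le_sum fun i _ =>
      mul_le_mul_of_nonneg_left (pow_le_pow_left₀ hx hxy _)
        (mul_nonneg (Nat.cast_nonneg i) (hp i))
  have hP'pos : 0 < P' x0 := by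
    rw [hP' x0]
    obtain ⟨j, hj, hjp⟩ : ∃ j ∈ Finset.Icc 2 D, 0 < p j := by
      by_contra h
      push_neg at h
      have : ∑ i ∈ Finset.Icc 2 D, p i = 0 :=
        Finset.sum_eq_zero fun i hi => le_antisymm (h i hi) (hp i)
      rw [this] at hsum; norm_num at hsum
    refine Finset.sum_pos' (fun i _ =>
      mul_nonneg (mul_nonneg (Nat.cast_nonneg i) (hp i)) (pow_nonneg hx00.le _)) ⟨j, hj, ?_⟩
    have hj2 : 2 ≤ j := (Finset.mem_Icc.mp hj).1
    have hjR : (0 : ℝ) < (j : ℝ) := by exact_mod_cast (by omega : 0 < j)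
    exact mul_pos (mul_pos hjR hjp) (pow_pos hx00 _)
  -- f facts
  have harg_nonneg : ∀ x : ℝ, 0 ≤ x → 0 ≤ r0 + (g : ℝ) * (1 - R) * P' x := by
    intro x hx
    have := hP'nonneg x hx
    nlinarith
  have hf_lt1 : ∀ x : ℝ, 0 ≤ x → f x < 1 := by
    intro x hx
    rw [hf x]
    have := gam_pos g _ (harg_nonneg x hx)
    have : 0 < Gam g (r0 + (g : ℝ) * (1 - R) * P' x) / (Nat.factorial (g - 1) : ℝ) :=
      div_pos this hC
    linarith
  have hf_mono : ∀ x y : ℝ, 0 ≤ x → x ≤ y → f x ≤ f y := by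
    intro x y hx hxy
    rw [hf x, hf y]
    have harg : r0 + (g : ℝ) * (1 - R) * P' x ≤ r0 + (g : ℝ) * (1 - R) * P' y := by
      have := hP'mono x y hx hxy
      nlinarith
    have hgam : Gam g (r0 + (g : ℝ) * (1 - R) * P' y) ≤
        Gam g (r0 + (g : ℝ) * (1 - R) * P' x) := by
      rcases eq_or_lt_of_le harg with h | h
      · rw [h]
      · exact (gam_strictAntiOn g (harg_nonneg x hx) (harg_nonneg y (hx.trans hxy)) h).le
    have h5 : Gam g (r0 + (g : ℝ) * (1 - R) * P' y) / (Nat.factorial (g - 1) : ℝ) ≤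
        Gam g (r0 + (g : ℝ) * (1 - R) * P' x) / (Nat.factorial (g - 1) : ℝ) := by gcongr
    linarith
  have hfx0 : x0 < f x0 := by
    rw [hf x0]
    have harg : r0 < r0 + (g : ℝ) * (1 - R) * P' x0 := by nlinarith
    have hgam : Gam g (r0 + (g : ℝ) * (1 - R) * P' x0) < Gam g r0 :=
      gam_strictAntiOn g hr0 (harg_nonneg x0 hx00.le) harg
    rw [hr0eq] at hgam
    have : Gam g (r0 + (g : ℝ) * (1 - R) * P' x0) / (Nat.factorial (g - 1) : ℝ) < 1 - x0 := by
      rw [div_lt_iff₀ hC]; linarith [mul_comm (1 - x0) ((Nat.factorial (g - 1) : ℝ))]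
    linarith
  -- induction
  have key : ∀ k, x0 ≤ u k ∧ u k < 1 ∧ u k ≤ u (k + 1) := by
    intro k
    induction k with
    | zero =>
      refine ⟨hu0.ge, hu0 ▸ hx01, ?_⟩
      rw [hu 0, hu0]; exact hfx0.le
    | succ k ih =>
      obtain ⟨h1, h2, h3⟩ := ih
      have hk0 : (0 : ℝ) ≤ u k := hx00.le.trans h1
      have hx0k1 : x0 ≤ u (k + 1) := h1.trans h3
      refine ⟨hx0k1, ?_, ?_⟩
      · rw [hu k]; exact hf_lt1 (u k) hk0
      · rw [hu (k + 1), hu k]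
        exact hf_mono (u k) (f (u k)) hk0 (by rw [← hu k]; exact h3)
  have hmono : Monotone u := monotone_nat_of_le_succ fun k => (key k).2.2
  have hmem : ∀ k, u k ∈ Set.Ico x0 1 := fun k => ⟨(key k).1, (key k).2.1⟩
  refine ⟨hmono, hmem, ?_⟩
  have hbdd : BddAbove (Set.range u) := ⟨1, by rintro _ ⟨k, rfl⟩; exact (key k).2.1.le⟩
  have htend : Filter.Tendsto u Filter.atTop (nhds (⨆ k, u k)) :=
    tendsto_atTop_ciSup hmono hbdd
  refine ⟨⨆ k, u k, htend, ?_⟩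
  by_contra h
  push_neg at h
  set L := ⨆ k, u k with hL
  have hu1L : u 1 ≤ L := le_ciSup hbdd 1
  have hu1 : x0 < u 1 := by rw [hu 0, hu0]; exact hfx0
  have hLmem : L ∈ Set.Ioo x0 (1 - δ) := ⟨lt_of_lt_of_le hu1 hu1L, h⟩
  -- f is continuous
  have hP'cont : Continuous P' := by
    have : P' = fun x : ℝ => ∑ i ∈ Finset.Icc 2 D, (i : ℝ) * p i * x ^ (i - 1) :=
      funext hP'
    rw [this]
    exact continuous_finset_sum _ fun i _ => continuous_const.mul (continuous_pow (i - 1))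
  have hfcont : Continuous f := by
    have : f = fun x : ℝ =>
        1 - Gam g (r0 + (g : ℝ) * (1 - R) * P' x) / (Nat.factorial (g - 1) : ℝ) :=
      funext hf
    rw [this]
    exact continuous_const.sub
      (((gam_continuous g).comp (continuous_const.add (continuous_const.mul hP'cont))).div_const _)
  have hfL : f L = L := by
    have h1 : Filter.Tendsto (fun k => u (k + 1)) Filter.atTop (nhds L) :=
      htend.comp (Filter.tendsto_add_atTop_nat 1)
    have h2 : Filter.Tendsto (fun k => f (u k)) Filter.atTop (nhds (f L)) :=
      (hfcont.tendsto L).comp htend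
    have heq : (fun k => u (k + 1)) = fun k => f (u k) := funext hu
    rw [heq] at h1
    exact (tendsto_nhds_unique h1 h2).symm
  exact absurd (hlt L hLmem) (by rw [hfL]; exact lt_irrefl L)
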